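/- Let C be an (n,2) binary code (4 codewords c1,...,c4) whose first column equals [0,0,0,1]^T, and let C' be obtained from C by replacing this first column with [0,0,1,1]^T. If the Hamming distance w(c3 ⊕ c4) is even, then the average ML correct-decoding probability of C' over a BSC with crossover probability ε ∈ (0, 1/2) is at least that of C. -/

import Mathlib

open Finset

/-- Minimum Hamming distance from `y` to the 4 rows (codewords) of `C`. -/
def dmin {m : ℕ} (C : Fin 4 → Fin m → ZMod 2) (y : Fin m → ZMod 2) : ℕ :=
  Finset.univ.inf' ⟨0, Finset.mem_univ 0⟩ (fun i => hammingDist (C i) y)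

/-- Number of outputs at min-distance `d` from the code `C`. -/
def alpha {m : ℕ} (C : Fin 4 → Fin m → ZMod 2) (d : ℕ) : ℕ :=
  (Finset.univ.filter (fun y : Fin m → ZMod 2 => dmin C y = d)).card

/-- Average ML correct decoding probability of `C` on a BSC with crossover `ε`. -/
noncomputable def lam {m : ℕ} (C : Fin 4 → Fin m → ZMod 2) (ε : ℝ) : ℝ :=
  (1/4) * ∑ d ∈ Finset.range (m+1), (alpha C d : ℝ) * (1-ε)^(m-d) * ε^d

/-- The column pattern (in `{0,1}^4`) associated with the integer `i`,
row 1 being the most significant bit. -/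
def pat (i : ℕ) : Fin 4 → ZMod 2 := fun j => if Nat.testBit i (3 - (j : ℕ)) then 1 else 0

/-- Number of columns of `C` equal to the pattern `p`. -/
def colCount {m : ℕ} (C : Fin 4 → Fin m → ZMod 2) (p : Fin 4 → ZMod 2) : ℕ :=
  (Finset.univ.filter (fun k : Fin m => (fun i => C i k) = p)).card

/-- A code is linear if its set of codewords is a subgroup of `({0,1}^n, ⊕)`. -/
def IsLinearCode {m : ℕ} (C : Fin 4 → Fin m → ZMod 2) : Prop :=
  ∃ H : AddSubgroup (Fin m → ZMod 2), Set.range C = (H : Set (Fin m → ZMod 2))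

/-- `w_i(y)`: number of positions with column pattern `i` where `y` is 1. -/
def wcount {m : ℕ} (C : Fin 4 → Fin m → ZMod 2) (i : ℕ) (y : Fin m → ZMod 2) : ℕ :=
  (Finset.univ.filter (fun k : Fin m => (fun r => C r k) = pat i ∧ y k = 1)).card

-- auxiliary
def Drest {n : ℕ} (x z : Fin (n+1) → ZMod 2) : ℕ :=
  (Finset.univ.filter (fun k : Fin (n+1) => k ≠ 0 ∧ x k ≠ z k)).card

def flipv {n : ℕ} (y : Fin (n+1) → ZMod 2) : Fin (n+1) → ZMod 2 :=
  fun k => if k = 0 then y k + 1 else y k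

lemma flipv_zero {n : ℕ} (y : Fin (n+1) → ZMod 2) : flipv y 0 = y 0 + 1 := by
  simp [flipv]

lemma flipv_invol {n : ℕ} : Function.Involutive (flipv (n := n)) := by
  intro y
  funext k
  by_cases hk : k = 0 <;> simp [flipv, hk]
  have : (1 : ZMod 2) + 1 = 0 := by decide
  rw [add_assoc, this, add_zero]

lemma ham_eq {n : ℕ} (x z : Fin (n+1) → ZMod 2) :
    hammingDist x z = Drest x z + (if x 0 = z 0 then 0 else 1) := by
  unfold Drest
  rw [hammingDist, Finset.card_filter, Finset.card_filter,
    Fin.sum_univ_succ, Fin.sum_univ_succ]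
  simp only [Fin.succ_ne_zero, ne_eq, not_false_iff, true_and]
  by_cases h : x 0 = z 0 <;> simp [h] <;> omega

lemma dmin_eq {m : ℕ} (C : Fin 4 → Fin m → ZMod 2) (y : Fin m → ZMod 2) :
    dmin C y = min (min (hammingDist (C 0) y) (hammingDist (C 1) y))
      (min (hammingDist (C 2) y) (hammingDist (C 3) y)) := by
  refine le_antisymm (le_min (le_min (Finset.inf'_le _ (Finset.mem_univ 0))
      (Finset.inf'_le _ (Finset.mem_univ 1)))
      (le_min (Finset.inf'_le _ (Finset.mem_univ 2)) (Finset.inf'_le _ (Finset.mem_univ 3))))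
    (Finset.le_inf' _ _ fun i _ => ?_)
  fin_cases i
  · exact (min_le_left _ _).trans (min_le_left _ _)
  · exact (min_le_left _ _).trans (min_le_right _ _)
  · exact (min_le_right _ _).trans (min_le_left _ _)
  · exact (min_le_right _ _).trans (min_le_right _ _)

lemma dmin_le {m : ℕ} (C : Fin 4 → Fin m → ZMod 2) (y : Fin m → ZMod 2) :
    dmin C y ≤ m := by
  refine (Finset.inf'_le _ (Finset.mem_univ 0)).trans ?_
  simpa using hammingDist_le_card_fintype (x := C 0) (y := y)

lemma lam_eq {m : ℕ} (C : Fin 4 → Fin m → ZMod 2) (ε : ℝ) :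
    lam C ε = (1/4) * ∑ y : Fin m → ZMod 2, (1-ε)^(m - dmin C y) * ε^(dmin C y) := by
  unfold lam alpha
  congr 1
  rw [← Finset.sum_fiberwise_of_maps_to
    (fun y _ => Finset.mem_range.mpr (Nat.lt_succ_of_le (dmin_le C y)))
    (fun y => (1-ε)^(m - dmin C y) * ε^(dmin C y))]
  refine Finset.sum_congr rfl fun d _ => ?_
  rw [Finset.sum_congr rfl (fun y hy => by
    rw [(Finset.mem_filter.mp hy).2]), Finset.sum_const, nsmul_eq_mul, mul_assoc]

lemma f_anti {m : ℕ} {ε : ℝ} (hε1 : 0 < ε) (hε2 : ε < 1/2) :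
    Antitone (fun d : ℕ => (1-ε)^(m-d) * ε^d) := by
  have h1 : (0:ℝ) < 1 - ε := by linarith
  have h2 : ε ≤ 1 - ε := by linarith
  apply antitone_nat_of_succ_le
  intro d

  by_cases h : d + 1 ≤ m
  · have hm : m - d = (m - (d+1)) + 1 := by omega
    rw [hm, pow_succ, pow_succ]
    have hnn : (0:ℝ) ≤ (1-ε)^(m-(d+1)) * ε^d := by positivity
    calc (1-ε)^(m-(d+1)) * (ε^d * ε) = ((1-ε)^(m-(d+1)) * ε^d) * ε := by ring
      _ ≤ ((1-ε)^(m-(d+1)) * ε^d) * (1-ε) := by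
          exact mul_le_mul_of_nonneg_left h2 hnn
      _ = (1-ε)^(m-(d+1)) * (1-ε) * ε^d := by ring
  · have hm1 : m - d = 0 := by omega
    have hm2 : m - (d+1) = 0 := by omega
    rw [hm1, hm2, pow_zero, one_mul, pow_succ]
    nlinarith [pow_pos hε1 d, pow_nonneg hε1.le d]

lemma key_min (f : ℕ → ℝ) (hf : Antitone f) (D0 D1 D2 D3 : ℕ) (hne : D2 ≠ D3) :
    f (min (min D0 D1) (min D2 (D3+1))) + f (min (min (D0+1) (D1+1)) (min (D2+1) D3))
      ≤ f (min (min D0 D1) (min (D2+1) (D3+1)))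
        + f (min (min (D0+1) (D1+1)) (min D2 D3)) := by
  rcases le_or_gt (min (min D0 D1) (D3+1)) D2 with h | h
  · have e1 : min (min D0 D1) (min D2 (D3+1)) = min (min D0 D1) (min (D2+1) (D3+1)) := by
      omega
    have e2 : min (min (D0+1) (D1+1)) (min D2 D3) ≤ min (min (D0+1) (D1+1)) (min (D2+1) D3) := by
      omega
    rw [e1]
    exact add_le_add_right (hf e2) _
  · have e1 : min (min D0 D1) (min D2 (D3+1)) = D2 := by omega
    have e2 : min (min (D0+1) (D1+1)) (min (D2+1) D3) = D2+1 := by omega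
    have e3 : min (min D0 D1) (min (D2+1) (D3+1)) = D2+1 := by omega
    have e4 : min (min (D0+1) (D1+1)) (min D2 D3) = D2 := by omega
    rw [e1, e2, e3, e4, add_comm]

lemma Drest_cast {n : ℕ} (x z : Fin (n+1) → ZMod 2) :
    ((Drest x z : ℕ) : ZMod 2)
      = ∑ k ∈ Finset.univ.filter (fun k : Fin (n+1) => k ≠ 0), (x k + z k) := by
  unfold Drest
  rw [← Finset.filter_filter, Finset.card_filter]
  push_cast
  refine Finset.sum_congr rfl fun k _ => ?_
  by_cases hab : x k = z k
  · simp [hab, CharTwo.add_self_eq_zero]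
  · have h1 : x k + z k = 1 := (show ∀ a b : ZMod 2, a ≠ b → a + b = 1 by decide) _ _ hab
    simp [hab, h1]

lemma Drest_triangle {n : ℕ} (x y z : Fin (n+1) → ZMod 2) :
    ((Drest x y + Drest z y : ℕ) : ZMod 2) = ((Drest x z : ℕ) : ZMod 2) := by
  push_cast
  rw [Drest_cast, Drest_cast, Drest_cast, ← Finset.sum_add_distrib]
  refine Finset.sum_congr rfl fun k _ => ?_
  have h2 : (2 : ZMod 2) = 0 := by decide
  linear_combination (y k) * h2

lemma Drest_congr {n : ℕ} {x x' z : Fin (n+1) → ZMod 2} (h : ∀ k, k ≠ 0 → x k = x' k) :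
    Drest x z = Drest x' z := by
  unfold Drest
  congr 1
  refine Finset.filter_congr fun k _ => ?_
  by_cases hk : k = 0 <;> simp [hk, h k]

lemma Drest_flip {n : ℕ} (x y : Fin (n+1) → ZMod 2) : Drest x (flipv y) = Drest x y := by
  unfold Drest
  congr 1
  refine Finset.filter_congr fun k _ => ?_
  by_cases hk : k = 0 <;> simp [flipv, hk]

/-- Theorem 1 of the paper (case `s=3`, `t=4`, column `[0001] → [0011]`): if
`w(c3 ⊕ c4)` is even, replacing a column of type `[0,0,0,1]ᵀ` by `[0,0,1,1]ᵀ`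
does not decrease the ML correct decoding probability. -/
theorem stmt5 (n : ℕ) (C C' : Fin 4 → Fin (n+1) → ZMod 2)
    (hcol : (fun i => C i 0) = pat 1)
    (heven : Even (hammingDist (C 2) (C 3)))
    (hC' : C' = fun i j => if j = 0 then pat 3 i else C i j)
    (ε : ℝ) (hε1 : 0 < ε) (hε2 : ε < 1/2) :
    lam C ε ≤ lam C' ε := by
  classical
  have hc : ∀ i, C i 0 = pat 1 i := fun i => congrFun hcol i
  have hc2col : ∀ i, C' i 0 = pat 3 i := by intro i; rw [hC']; simp
  have hc2off : ∀ i k, k ≠ 0 → C' i k = C i k := by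
    intro i k hk; rw [hC']; simp [hk]
  have p10 : pat 1 0 = 0 := by decide
  have p11 : pat 1 1 = 0 := by decide
  have p12 : pat 1 2 = 0 := by decide
  have p13 : pat 1 3 = 1 := by decide
  have p30 : pat 3 0 = 0 := by decide
  have p31 : pat 3 1 = 0 := by decide
  have p32 : pat 3 2 = 1 := by decide
  have p33 : pat 3 3 = 1 := by decide
  have if00 : (if (0:ZMod 2) = 0 then (0:ℕ) else 1) = 0 := by decide
  have if10 : (if (1:ZMod 2) = 0 then (0:ℕ) else 1) = 1 := by decide
  have if01 : (if (0:ZMod 2) = 1 then (0:ℕ) else 1) = 1 := by decide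
  have if11 : (if (1:ZMod 2) = 1 then (0:ℕ) else 1) = 0 := by decide
  have if0p : (if (0:ZMod 2) = 0 + 1 then (0:ℕ) else 1) = 1 := by decide
  have if1p : (if (1:ZMod 2) = 0 + 1 then (0:ℕ) else 1) = 0 := by decide
  have if0q : (if (0:ZMod 2) = 1 + 1 then (0:ℕ) else 1) = 0 := by decide
  have if1q : (if (1:ZMod 2) = 1 + 1 then (0:ℕ) else 1) = 1 := by decide
  have hf : Antitone (fun d : ℕ => (1-ε)^(n+1-d) * ε^d) := f_anti hε1 hε2
  have hodd : Odd (Drest (C 2) (C 3)) := by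
    have h23 : hammingDist (C 2) (C 3) = Drest (C 2) (C 3) + 1 := by
      rw [ham_eq, hc 2, hc 3, p12, p13, if_neg (by decide : ¬ (0:ZMod 2) = 1)]
    rw [h23] at heven
    exact Nat.not_even_iff_odd.mp (Nat.even_add_one.mp heven)
  have hne : ∀ y, Drest (C 2) y ≠ Drest (C 3) y := by
    intro y hEq
    have ht := (ZMod.natCast_eq_natCast_iff _ _ _).mp (Drest_triangle (C 2) y (C 3))
    obtain ⟨t, hodd_t⟩ := hodd
    unfold Nat.ModEq at ht
    omega
  have point : ∀ y : Fin (n+1) → ZMod 2,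
      (1-ε)^(n+1-dmin C y) * ε^(dmin C y)
        + (1-ε)^(n+1-dmin C (flipv y)) * ε^(dmin C (flipv y))
      ≤ (1-ε)^(n+1-dmin C' y) * ε^(dmin C' y)
        + (1-ε)^(n+1-dmin C' (flipv y)) * ε^(dmin C' (flipv y)) := by
    intro y
    have hDc : ∀ i z, Drest (C' i) z = Drest (C i) z :=
      fun i z => Drest_congr (fun k hk => hc2off i k hk)
    have key := key_min (fun d => (1-ε)^(n+1-d) * ε^d) hf
      (Drest (C 0) y) (Drest (C 1) y) (Drest (C 2) y) (Drest (C 3) y) (hne y)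
    rw [dmin_eq, dmin_eq, dmin_eq, dmin_eq]
    simp only [ham_eq, hDc, Drest_flip, hc2col, hc, flipv_zero]
    rcases (show ∀ a : ZMod 2, a = 0 ∨ a = 1 by decide) (y 0) with h | h <;>
      rw [h] <;>
      simp only [p10, p11, p12, p13, p30, p31, p32, p33,
        if00, if10, if01, if11, if0p, if1p, if0q, if1q, add_zero]
    · exact key
    · exact le_trans ((add_comm _ _).trans_le key) (le_of_eq (add_comm _ _))
  have hbij := (flipv_invol (n := n)).bijective
  have sumflip : ∀ D : (Fin (n+1) → ZMod 2) → ℕ,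
      ∑ y : Fin (n+1) → ZMod 2, (1-ε)^(n+1-D (flipv y)) * ε^(D (flipv y))
        = ∑ y : Fin (n+1) → ZMod 2, (1-ε)^(n+1-D y) * ε^(D y) :=
    fun D => Fintype.sum_bijective _ hbij _ _ (fun y => rfl)
  have main : ∑ y : Fin (n+1) → ZMod 2, (1-ε)^(n+1-dmin C y) * ε^(dmin C y)
      ≤ ∑ y : Fin (n+1) → ZMod 2, (1-ε)^(n+1-dmin C' y) * ε^(dmin C' y) := by
    have h2 : ∑ y : Fin (n+1) → ZMod 2,
        ((1-ε)^(n+1-dmin C y) * ε^(dmin C y)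
          + (1-ε)^(n+1-dmin C (flipv y)) * ε^(dmin C (flipv y)))
        ≤ ∑ y : Fin (n+1) → ZMod 2,
        ((1-ε)^(n+1-dmin C' y) * ε^(dmin C' y)
          + (1-ε)^(n+1-dmin C' (flipv y)) * ε^(dmin C' (flipv y))) :=
      Finset.sum_le_sum (fun y _ => point y)
    rw [Finset.sum_add_distrib, Finset.sum_add_distrib,
      sumflip (dmin C), sumflip (dmin C')] at h2
    linarith
  rw [lam_eq, lam_eq]
  exact mul_le_mul_of_nonneg_left main (by norm_num)
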